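/- Let A be n×n symmetric positive definite and B an n×m full-column-rank matrix, C = BᵀA⁻¹B, 𝒜̄ = [[A,B],[-Bᵀ,C]]. For the generalized eigenproblem 𝒜v = λ𝒜̄v with 𝒜 = [[A,B],[Bᵀ,0]], the eigenvalue λ = 1 has geometric multiplicity n: the eigenspace is {(v_u, v_t) : C v_t = 2Bᵀv_u, v_u ∈ ℝⁿ} which is n-dimensional. -/

import Mathlib

open Matrix

/-- For `C = BᵀA⁻¹B`, the eigenvalue `λ = 1` of the generalized eigenproblem
`𝒜v = λ𝒜̄v` has geometric multiplicity `n`, with eigenspace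
`{(v_u, v_t) : C v_t = 2 Bᵀ v_u}`. -/
theorem racp_alternative_eigenspace_at_one
    (n m : ℕ)
    (A : Matrix (Fin n) (Fin n) ℝ) (hA : A.PosDef)
    (B : Matrix (Fin n) (Fin m) ℝ) (hB : B.rank = m)
    (C : Matrix (Fin m) (Fin m) ℝ) (hC : C = Bᵀ * A⁻¹ * B)
    (𝒜 : Matrix (Fin n ⊕ Fin m) (Fin n ⊕ Fin m) ℝ)
    (h𝒜 : 𝒜 = Matrix.fromBlocks A B Bᵀ 0)
    (𝒜bar : Matrix (Fin n ⊕ Fin m) (Fin n ⊕ Fin m) ℝ)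
    (h𝒜bar : 𝒜bar = Matrix.fromBlocks A B (-Bᵀ) C) :
    {v : Fin n ⊕ Fin m → ℝ | 𝒜 *ᵥ v = 𝒜bar *ᵥ v} =
      {v : Fin n ⊕ Fin m → ℝ |
        C *ᵥ (fun j => v (Sum.inr j)) = (2 : ℝ) • (Bᵀ *ᵥ (fun i => v (Sum.inl i)))} ∧
    Module.finrank ℝ (LinearMap.ker ((𝒜 - 𝒜bar).mulVecLin)) = n := by
  -- B has trivial mulVec kernel
  have hBker : ∀ x : Fin m → ℝ, B *ᵥ x = 0 → x = 0 := by
    intro x hx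
    have h1 : B.rank + Module.finrank ℝ (LinearMap.ker B.mulVecLin) = m := by
      have := LinearMap.finrank_range_add_finrank_ker B.mulVecLin
      rw [Module.finrank_fin_fun] at this
      rw [Matrix.rank]; exact this
    rw [hB] at h1
    have h3 : LinearMap.ker B.mulVecLin = ⊥ := Submodule.finrank_eq_zero.mp (by omega)
    have hx' : x ∈ LinearMap.ker B.mulVecLin := by
      simpa [Matrix.mulVecLin_apply] using hx
    rw [h3] at hx'
    simpa using hx'
  have hAinv : (A⁻¹).PosDef := hA.inv
  -- C has trivial mulVec kernel
  have hCker : ∀ x : Fin m → ℝ, C *ᵥ x = 0 → x = 0 := by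
    intro x hx
    by_contra hx0
    have hBx : B *ᵥ x ≠ 0 := fun h => hx0 (hBker x h)
    have hpos := hAinv.dotProduct_mulVec_pos hBx
    have hdp : star x ⬝ᵥ (C *ᵥ x) = star (B *ᵥ x) ⬝ᵥ (A⁻¹ *ᵥ (B *ᵥ x)) := by
      rw [hC, ← Matrix.mulVec_mulVec, ← Matrix.mulVec_mulVec,
        Matrix.dotProduct_mulVec, Matrix.vecMul_transpose]
      simp [Matrix.dotProduct_mulVec]
    rw [hx] at hdp
    simp only [dotProduct_zero] at hdp
    rw [← hdp] at hpos
    simp at hpos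
  have hCinj : Function.Injective C.mulVec := by
    intro x y hxy
    have h0 : C *ᵥ (x - y) = 0 := by rw [Matrix.mulVec_sub, hxy, sub_self]
    exact sub_eq_zero.mp (hCker _ h0)
  have hCunit : IsUnit C.det :=
    (Matrix.isUnit_iff_isUnit_det C).mp (Matrix.mulVec_injective_iff_isUnit.mp hCinj)
  have hCCinv : C * C⁻¹ = 1 := Matrix.mul_nonsing_inv C hCunit
  -- key equivalence
  have key : ∀ v : Fin n ⊕ Fin m → ℝ, (𝒜 *ᵥ v = 𝒜bar *ᵥ v ↔
      C *ᵥ (fun j => v (Sum.inr j)) = (2 : ℝ) • (Bᵀ *ᵥ (fun i => v (Sum.inl i)))) := by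
    intro v
    rw [h𝒜, h𝒜bar, Matrix.fromBlocks_mulVec, Matrix.fromBlocks_mulVec]
    constructor
    · intro h
      funext j
      have hj := congrFun h (Sum.inr j)
      simp only [Sum.elim_inr, Matrix.zero_mulVec, add_zero, Matrix.neg_mulVec,
        Pi.add_apply, Pi.neg_apply] at hj
      simp only [Pi.smul_apply, smul_eq_mul]
      have e1 : (C *ᵥ fun j => v (Sum.inr j)) j = (C *ᵥ (v ∘ Sum.inr)) j := rfl
      have e2 : (Bᵀ *ᵥ fun i => v (Sum.inl i)) j = (Bᵀ *ᵥ (v ∘ Sum.inl)) j := rfl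
      rw [e1, e2]
      linarith
    · intro h
      funext i
      cases i with
      | inl i => rfl
      | inr j =>
        simp only [Sum.elim_inr, Matrix.zero_mulVec, add_zero, Matrix.neg_mulVec,
          Pi.add_apply, Pi.neg_apply]
        have hj := congrFun h j
        simp only [Pi.smul_apply, smul_eq_mul] at hj
        have e1 : (C *ᵥ (v ∘ Sum.inr)) j = (C *ᵥ fun j => v (Sum.inr j)) j := rfl
        have e2 : (Bᵀ *ᵥ fun i => v (Sum.inl i)) j = (Bᵀ *ᵥ (v ∘ Sum.inl)) j := rfl
        rw [e1, hj, e2]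
        ring
  have keyker : ∀ v : Fin n ⊕ Fin m → ℝ,
      (v ∈ LinearMap.ker (𝒜 - 𝒜bar).mulVecLin ↔ 𝒜 *ᵥ v = 𝒜bar *ᵥ v) := by
    intro v
    rw [LinearMap.mem_ker, Matrix.mulVecLin_apply, Matrix.sub_mulVec, sub_eq_zero]
  refine ⟨Set.ext fun v => key v, ?_⟩
  -- the parametrizing linear map
  let f : (Fin n → ℝ) →ₗ[ℝ] (Fin n ⊕ Fin m → ℝ) :=
    { toFun := fun u => Sum.elim u (C⁻¹ *ᵥ ((2 : ℝ) • (Bᵀ *ᵥ u)))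
      map_add' := by
        intro u w
        funext i
        cases i with
        | inl i => rfl
        | inr j =>
          show (C⁻¹ *ᵥ ((2 : ℝ) • (Bᵀ *ᵥ (u + w)))) j
            = (C⁻¹ *ᵥ ((2 : ℝ) • (Bᵀ *ᵥ u))) j + (C⁻¹ *ᵥ ((2 : ℝ) • (Bᵀ *ᵥ w))) j
          rw [Matrix.mulVec_add, smul_add, Matrix.mulVec_add]
          rfl
      map_smul' := by
        intro c u
        funext i
        cases i with
        | inl i => rfl
        | inr j =>
          show (C⁻¹ *ᵥ ((2 : ℝ) • (Bᵀ *ᵥ (c • u)))) j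
            = c • ((C⁻¹ *ᵥ ((2 : ℝ) • (Bᵀ *ᵥ u))) j)
          simp only [Matrix.mulVec_smul, Pi.smul_apply, smul_eq_mul]
          ring }
  have hfinj : Function.Injective f := by
    intro u w h
    funext i
    exact congrFun h (Sum.inl i)
  have hrange : LinearMap.range f = LinearMap.ker (𝒜 - 𝒜bar).mulVecLin := by
    ext v
    rw [keyker v, key v, LinearMap.mem_range]
    constructor
    · rintro ⟨u, rfl⟩
      show C *ᵥ (C⁻¹ *ᵥ ((2 : ℝ) • (Bᵀ *ᵥ u))) = (2 : ℝ) • (Bᵀ *ᵥ u)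
      rw [Matrix.mulVec_mulVec, hCCinv, Matrix.one_mulVec]
    · intro h
      refine ⟨fun i => v (Sum.inl i), ?_⟩
      have ht : C⁻¹ *ᵥ ((2 : ℝ) • (Bᵀ *ᵥ fun i => v (Sum.inl i))) = fun j => v (Sum.inr j) := by
        apply hCinj
        rw [Matrix.mulVec_mulVec, hCCinv, Matrix.one_mulVec, h]
      funext i
      cases i with
      | inl i => rfl
      | inr j =>
        show (C⁻¹ *ᵥ ((2 : ℝ) • (Bᵀ *ᵥ fun i => v (Sum.inl i)))) j = v (Sum.inr j)
        rw [ht]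
  rw [← hrange, LinearMap.finrank_range_of_inj hfinj, Module.finrank_fin_fun]
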